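/- Let $R: \mathbb{R} \to \mathbb{R}^{n\times n}$ be continuous with symmetric values, and let $A$ solve $\ddot{A} + R A = 0$ with $\dot{A}(\lambda)^{\mathsf T} A(\lambda)$ symmetric for all $\lambda$. Suppose at some $\lambda_0$: the first column of $A(\lambda_0)$ vanishes, the remaining $n-1$ columns of $A(\lambda_0)$ are linearly independent, and the first column of $A$ does not vanish identically as a function of $\lambda$. Then $\frac{d}{d\lambda}\det A(\lambda)\big|_{\lambda = \lambda_0} \neq 0$. -/

import Mathlib

open Set Matrix

lemma ode_second_order_unique {N : ℕ} (R : ℝ → Fin N → Fin N → ℝ) (hRcont : Continuous R)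
    (u w : ℝ → Fin N → ℝ)
    (hu : ∀ t, HasDerivAt u (w t) t)
    (hw : ∀ t, HasDerivAt w (fun i => -∑ k, R t i k * u t k) t)
    (t₀ : ℝ) (hu0 : u t₀ = 0) (hw0 : w t₀ = 0) (t : ℝ) : u t = 0 := by
  set a := min t t₀ - 1 with ha
  set b := max t t₀ + 1 with hb
  have hab : a ≤ b := by
    have h1 := min_le_max (a := t) (b := t₀); simp only [ha, hb]; linarith
  have ht0 : t₀ ∈ Set.Ioo a b := by
    constructor
    · have := min_le_right t t₀; simp only [ha]; linarith
    · have := le_max_right t t₀; simp only [hb]; linarith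
  have ht : t ∈ Set.Icc a b := by
    constructor
    · have := min_le_left t t₀; simp only [ha]; linarith
    · have := le_max_left t t₀; simp only [hb]; linarith
  have hcomp : ∀ i k, Continuous fun s => R s i k := fun i k =>
    (continuous_apply k).comp ((continuous_apply i).comp hRcont)
  have hcont : Continuous fun s => ∑ i, ∑ k, |R s i k| := by
    apply continuous_finset_sum; intro i _; apply continuous_finset_sum; intro k _
    exact (hcomp i k).abs
  obtain ⟨C, hC⟩ := (isCompact_Icc (a := a) (b := b)).exists_bound_of_continuousOn
    hcont.continuousOn
  have hCb : ∀ s ∈ Set.Icc a b, ∀ i, (∑ k, |R s i k|) ≤ C := by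
    intro s hs i
    calc ∑ k, |R s i k| ≤ ∑ i, ∑ k, |R s i k| :=
          Finset.single_le_sum (f := fun i => ∑ k, |R s i k|)
            (fun i _ => Finset.sum_nonneg fun k _ => abs_nonneg _) (Finset.mem_univ i)
      _ ≤ C := (le_abs_self _).trans (by simpa [Real.norm_eq_abs] using hC s hs)
  set Kr := max 1 C with hKr
  have hC1 : (1:ℝ) ≤ Kr := le_max_left _ _
  set K := Kr.toNNReal with hK
  have hKco : (K : ℝ) = Kr := Real.coe_toNNReal _ (le_trans zero_le_one hC1)
  set Rc : ℝ → Fin N → Fin N → ℝ := fun s => R (Set.projIcc a b hab s) with hRc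
  set v : ℝ → (Fin N → ℝ) × (Fin N → ℝ) → (Fin N → ℝ) × (Fin N → ℝ) :=
    fun s x => (x.2, fun i => -∑ k, Rc s i k * x.1 k) with hv
  have hRcb : ∀ s i, (∑ k, |Rc s i k|) ≤ C := fun s i =>
    hCb _ (Set.projIcc a b hab s).2 i
  have hlip : ∀ s, LipschitzOnWith K (v s) Set.univ := by
    intro s
    apply LipschitzWith.lipschitzOnWith
    apply LipschitzWith.of_dist_le_mul
    intro x y
    rw [hKco, Prod.dist_eq]
    apply max_le
    · calc dist (v s x).1 (v s y).1 = dist x.2 y.2 := rfl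
        _ ≤ dist x y := by rw [Prod.dist_eq]; exact le_max_right _ _
        _ ≤ Kr * dist x y := le_mul_of_one_le_left dist_nonneg hC1
    · have hd : (0:ℝ) ≤ Kr * dist x y := mul_nonneg (by linarith) dist_nonneg
      apply (dist_pi_le_iff hd).mpr
      intro i
      have h1 : ∀ k, |x.1 k - y.1 k| ≤ dist x y := fun k => by
        calc |x.1 k - y.1 k| = dist (x.1 k) (y.1 k) := (Real.dist_eq _ _).symm
          _ ≤ dist x.1 y.1 := dist_le_pi_dist _ _ k
          _ ≤ dist x y := by rw [Prod.dist_eq]; exact le_max_left _ _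
      calc dist ((v s x).2 i) ((v s y).2 i)
          = |∑ k, Rc s i k * x.1 k - ∑ k, Rc s i k * y.1 k| := by
            simp only [hv, Real.dist_eq]
            rw [show -∑ k, Rc s i k * x.1 k - -∑ k, Rc s i k * y.1 k
              = -((∑ k, Rc s i k * x.1 k) - ∑ k, Rc s i k * y.1 k) by ring, abs_neg]
        _ = |∑ k, Rc s i k * (x.1 k - y.1 k)| := by
            rw [← Finset.sum_sub_distrib]
            congr 1; apply Finset.sum_congr rfl; intro k _; ring
        _ ≤ ∑ k, |Rc s i k * (x.1 k - y.1 k)| := Finset.abs_sum_le_sum_abs _ _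
        _ ≤ ∑ k, |Rc s i k| * dist x y := by
            apply Finset.sum_le_sum; intro k _; rw [abs_mul]
            exact mul_le_mul_of_nonneg_left (h1 k) (abs_nonneg _)
        _ = (∑ k, |Rc s i k|) * dist x y := (Finset.sum_mul _ _ _).symm
        _ ≤ Kr * dist x y :=
            mul_le_mul_of_nonneg_right ((hRcb s i).trans (le_max_right 1 C)) dist_nonneg
  set f : ℝ → (Fin N → ℝ) × (Fin N → ℝ) := fun τ => (u τ, w τ) with hf
  have hf' : ∀ s ∈ Set.Ioo a b, HasDerivAt f (v s (f s)) s := by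
    intro s hs
    have hRs : Rc s = R s := by
      show R ((Set.projIcc a b hab s : Set.Icc a b) : ℝ) = R s
      rw [Set.projIcc_of_mem hab (Set.Ioo_subset_Icc_self hs)]
    have : v s (f s) = (w s, fun i => -∑ k, R s i k * u s k) := by
      simp only [hv, hf, hRs]
    rw [this]
    exact (hu s).prodMk (hw s)
  have hv0 : ∀ s, v s 0 = 0 := by
    intro s
    simp only [hv, Prod.fst_zero, Prod.snd_zero]
    refine Prod.ext rfl ?_
    funext i
    simp
  have key := ODE_solution_unique_of_mem_Icc (fun s _ => hlip s) ht0
    (fun s hs => ((hu s).prodMk (hw s)).continuousAt.continuousWithinAt)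
    hf' (fun _ _ => Set.mem_univ _)
    (continuousOn_const (c := (0 : (Fin N → ℝ) × (Fin N → ℝ))))
    (fun s hs => by simpa [hv0 s] using hasDerivAt_const s (0 : (Fin N → ℝ) × (Fin N → ℝ)))
    (fun _ _ => Set.mem_univ _)
    (by simp [hf, hu0, hw0])
  have := key ht
  simpa [hf, Prod.ext_iff] using congrArg Prod.fst this



/-- At a generic focal point, `∂_λ det A ≠ 0`: if `A` solves the matrix Jacobi
equation with symmetric `Ȧᵀ A`, the first column of `A(λ₀)` vanishes, the other
columns are linearly independent, and the first column is not identically zero,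
then the derivative of `det A` at `λ₀` is nonzero. -/
theorem jacobi_det_deriv_ne_zero (n : ℕ)
    (R A : ℝ → (Fin (n + 1) → Fin (n + 1) → ℝ))
    (hRcont : Continuous R)
    (hRsymm : ∀ lam i j, R lam i j = R lam j i)
    (hA1 : ∀ lam, DifferentiableAt ℝ A lam)
    (hA2 : ∀ lam, DifferentiableAt ℝ (deriv A) lam)
    (hJacobi : ∀ lam i j,
      deriv (deriv A) lam i j + ∑ k, R lam i k * A lam k j = 0)
    (hsym : ∀ lam j k,
      (∑ i, deriv A lam i j * A lam i k) = (∑ i, deriv A lam i k * A lam i j))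
    (lam₀ : ℝ)
    (hcol0 : ∀ i, A lam₀ i 0 = 0)
    (hindep : LinearIndependent ℝ
      (fun j : {j : Fin (n + 1) // j ≠ 0} => fun i => A lam₀ i j.1))
    (hnotid : ¬ ∀ lam i, A lam i 0 = 0) :
    deriv (fun lam => (Matrix.of (A lam)).det) lam₀ ≠ 0 := by
  classical
  -- entrywise derivatives
  have hentry : ∀ lam i j, HasDerivAt (fun τ => A τ i j) (deriv A lam i j) lam := by
    intro lam i j
    have h1 : HasDerivAt A (deriv A lam) lam := (hA1 lam).hasDerivAt
    have h2 : HasDerivAt (fun τ => A τ i) (deriv A lam i) lam :=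
      (ContinuousLinearMap.proj (R := ℝ) (φ := fun _ : Fin (n+1) => Fin (n+1) → ℝ)
        i).hasFDerivAt.comp_hasDerivAt lam h1
    exact (ContinuousLinearMap.proj (R := ℝ) (φ := fun _ : Fin (n+1) => ℝ)
        j).hasFDerivAt.comp_hasDerivAt lam h2
  set c : Fin (n + 1) → ℝ := fun i => deriv A lam₀ i 0 with hc
  -- c ≠ 0 : otherwise column 0 of A solves the ODE with zero initial data
  have hcne : c ≠ 0 := by
    intro hc0
    apply hnotid
    -- set up u and w
    set L : (Fin (n+1) → Fin (n+1) → ℝ) →L[ℝ] (Fin (n+1) → ℝ) :=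
      ContinuousLinearMap.pi (fun i : Fin (n+1) =>
        (ContinuousLinearMap.proj (R := ℝ) (φ := fun _ : Fin (n+1) => ℝ) 0).comp
        (ContinuousLinearMap.proj (R := ℝ) (φ := fun _ : Fin (n+1) => Fin (n+1) → ℝ) i)) with hL
    set u : ℝ → Fin (n+1) → ℝ := fun t => L (A t) with hu'
    set w : ℝ → Fin (n+1) → ℝ := fun t => L (deriv A t) with hw'
    have hu : ∀ t, HasDerivAt u (w t) t := fun t =>
      L.hasFDerivAt.comp_hasDerivAt t (hA1 t).hasDerivAt
    have hw : ∀ t, HasDerivAt w (fun i => -∑ k, R t i k * u t k) t := by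
      intro t
      have h := L.hasFDerivAt.comp_hasDerivAt t (hA2 t).hasDerivAt
      have heq : (L (deriv (deriv A) t)) = fun i => -∑ k, R t i k * u t k := by
        funext i
        have := hJacobi t i 0
        show deriv (deriv A) t i 0 = -∑ k, R t i k * A t k 0
        linarith
      rw [← heq]
      exact h
    have key := ode_second_order_unique R hRcont u w hu hw lam₀
      (by funext i; exact hcol0 i)
      (by funext i; exact congrFun hc0 i)
    intro lam i
    exact congrFun (key lam) i
  -- the matrix B
  set B : Matrix (Fin (n + 1)) (Fin (n + 1)) ℝ :=
    Matrix.of fun i j => if j = 0 then c i else A lam₀ i j with hB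
  -- derivative of det equals det B
  have hdet : HasDerivAt (fun lam => (Matrix.of (A lam)).det) B.det lam₀ := by
    have hD : HasDerivAt
        (fun lam => ∑ σ : Equiv.Perm (Fin (n+1)),
          ((Equiv.Perm.sign σ : ℤ) : ℝ) * ∏ i, A lam (σ i) i)
        (∑ σ : Equiv.Perm (Fin (n+1)), ((Equiv.Perm.sign σ : ℤ) : ℝ) *
          (∑ i, (∏ j ∈ Finset.univ.erase i, A lam₀ (σ j) j) • deriv A lam₀ (σ i) i)) lam₀ := by
      apply HasDerivAt.fun_sum
      intro σ _
      exact (HasDerivAt.fun_finsetProd (fun i _ => hentry lam₀ (σ i) i)).const_mul _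
    have hfun : (fun lam => (Matrix.of (A lam)).det)
        = fun lam => ∑ σ : Equiv.Perm (Fin (n+1)),
          ((Equiv.Perm.sign σ : ℤ) : ℝ) * ∏ i, A lam (σ i) i := by
      funext lam
      exact Matrix.det_apply' _
    have hval : (∑ σ : Equiv.Perm (Fin (n+1)), ((Equiv.Perm.sign σ : ℤ) : ℝ) *
          (∑ i, (∏ j ∈ Finset.univ.erase i, A lam₀ (σ j) j) • deriv A lam₀ (σ i) i))
        = B.det := by
      rw [Matrix.det_apply']
      apply Finset.sum_congr rfl
      intro σ _
      congr 1
      have hsum : (∑ i, (∏ j ∈ Finset.univ.erase i, A lam₀ (σ j) j) • deriv A lam₀ (σ i) i)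
          = (∏ j ∈ Finset.univ.erase 0, A lam₀ (σ j) j) * c (σ 0) := by
        rw [Finset.sum_eq_single 0]
        · rfl
        · intro i _ hi
          have h0 : (0 : Fin (n+1)) ∈ Finset.univ.erase i :=
            Finset.mem_erase.mpr ⟨Ne.symm hi, Finset.mem_univ _⟩
          have hz : (∏ j ∈ Finset.univ.erase i, A lam₀ (σ j) j) = 0 :=
            Finset.prod_eq_zero h0 (hcol0 (σ 0))
          rw [hz]
          simp
        · intro h; exact absurd (Finset.mem_univ _) h
      rw [hsum]
      rw [← Finset.mul_prod_erase Finset.univ _ (Finset.mem_univ (0 : Fin (n+1)))]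
      have hB0 : B (σ 0) 0 = c (σ 0) := by simp [hB]
      have hBj : ∀ j ∈ Finset.univ.erase (0 : Fin (n+1)), B (σ j) j = A lam₀ (σ j) j := by
        intro j hj
        simp [hB, (Finset.mem_erase.mp hj).1]
      rw [hB0, Finset.prod_congr rfl hBj]
      ring
    rw [hfun, ← hval]
    exact hD
  -- det B ≠ 0
  have horth : ∀ k, k ≠ 0 → (∑ i, c i * A lam₀ i k) = 0 := by
    intro k _
    rw [hc]
    rw [hsym lam₀ 0 k]
    simp [hcol0]
  have hcc : (∑ i, c i * c i) ≠ 0 := by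
    intro h
    apply hcne
    funext i
    have := (Finset.sum_eq_zero_iff_of_nonneg (fun i _ => mul_self_nonneg (c i))).mp h i
      (Finset.mem_univ i)
    exact mul_self_eq_zero.mp this
  have hindepB : LinearIndependent ℝ (fun j => Bᵀ j) := by
    rw [Fintype.linearIndependent_iff]
    intro g hg
    have hgi : ∀ i, (∑ j, g j * B i j) = 0 := by
      intro i
      have := congrFun hg i
      simpa [Finset.sum_apply] using this
    have h2 : ∀ j, (∑ i, c i * B i j) = if j = 0 then (∑ i, c i * c i) else 0 := by
      intro j
      by_cases hj : j = 0
      · subst hj; simp [hB]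
      · simp only [hj, if_false]
        have hBj : ∀ i, B i j = A lam₀ i j := fun i => by simp [hB, hj]
        calc (∑ i, c i * B i j) = ∑ i, c i * A lam₀ i j :=
              Finset.sum_congr rfl fun i _ => by rw [hBj i]
          _ = 0 := horth j hj
    have hg0 : g 0 = 0 := by
      have h1 : (∑ j, g j * ∑ i, c i * B i j) = 0 := by
        have hsw : (∑ j, g j * ∑ i, c i * B i j) = ∑ i, c i * (∑ j, g j * B i j) := by
          simp_rw [Finset.mul_sum]
          rw [Finset.sum_comm]
          exact Finset.sum_congr rfl fun j _ => Finset.sum_congr rfl fun i _ => by ring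
        rw [hsw]
        simp [hgi]
      have h3 : (∑ j, g j * ∑ i, c i * B i j) = g 0 * ∑ i, c i * c i := by
        rw [Finset.sum_eq_single 0]
        · rw [h2 0]; simp
        · intro j _ hj; rw [h2 j]; simp [hj]
        · intro h; exact absurd (Finset.mem_univ _) h
      rw [h3] at h1
      exact (mul_eq_zero.mp h1).resolve_right hcc
    intro j
    by_cases hj : j = 0
    · rw [hj]; exact hg0
    · refine (Fintype.linearIndependent_iff.mp hindep) (fun j => g j.1) ?_ ⟨j, hj⟩
      have hrem : (∑ j ∈ Finset.univ.erase (0 : Fin (n+1)), g j • Bᵀ j) = 0 := by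
        have h4 := hg
        rw [← Finset.add_sum_erase Finset.univ _ (Finset.mem_univ (0 : Fin (n+1)))] at h4
        rw [hg0] at h4
        simpa using h4
      have hconv : (∑ j : {j : Fin (n+1) // j ≠ 0}, g j.1 • (fun i => A lam₀ i j.1))
          = ∑ j ∈ Finset.univ.erase (0 : Fin (n+1)), g j • Bᵀ j := by
        have hst := Finset.sum_subtype (p := fun j : Fin (n+1) => j ≠ 0) (F := inferInstance)
          (Finset.univ.erase (0 : Fin (n+1))) (fun x => by simp [Finset.mem_erase])
          (fun j => g j • Bᵀ j)
        rw [hst]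
        apply Finset.sum_congr rfl
        intro j _
        have hBt : Bᵀ j.1 = fun i => A lam₀ i j.1 := by
          funext i
          simp [hB, Matrix.transpose_apply, j.2]
        rw [hBt]
      rw [← hconv] at hrem
      exact hrem
  have hBu : IsUnit B := Matrix.linearIndependent_cols_iff_isUnit.mp hindepB
  have hBdet : B.det ≠ 0 := isUnit_iff_ne_zero.mp ((Matrix.isUnit_iff_isUnit_det B).mp hBu)
  rw [hdet.deriv]
  exact hBdet
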